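/- Let w with ι(w) = k and |w|_a ≥ k+1 for all letters a. Then SJSF_{k+1}(w, 1) = (ScatFact_k(w) · C) \ ScatFact_{k+1}(w), where C is the complement in Σ of the alphabet of the rest r(w) of the arch factorisation of w. -/

import Mathlib

open List

variable {α : Type*}

/-- Parikh vector comparison: `u` has at most as many occurrences of each letter as `w`. -/
def ParikhLE [DecidableEq α] (u w : List α) : Prop :=
  ∀ a : α, u.count a ≤ w.count a

/-- `u` is a jumbled scattered factor of `w` with `ℓ` jumbles. -/
def JSF [DecidableEq α] (w : List α) (ℓ : ℕ) (u : List α) : Prop :=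
  ParikhLE u w ∧ ∃ v : List α, v.Sublist u ∧ v.Sublist w ∧ v.length + ℓ = u.length

/-- The jumble index `δ_w(u)`: minimal number of jumbles. -/
noncomputable def jumbleIndex [DecidableEq α] (w u : List α) : ℕ :=
  sInf {ℓ : ℕ | JSF w ℓ u}

/-- Length of a longest common scattered factor (subsequence) of `u` and `w`. -/
noncomputable def lcsf (u w : List α) : ℕ :=
  sSup {n : ℕ | ∃ v : List α, v.Sublist u ∧ v.Sublist w ∧ v.length = n}

/-- Length-`k` jumbled scattered factors of `w` with `ℓ` jumbles. -/
def JScatFactK [DecidableEq α] (k : ℕ) (w : List α) (ℓ : ℕ) : Set (List α) :=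
  {u | u.length = k ∧ JSF w ℓ u}

/-- Jumbled scattered factors of `w` of length at most `k` with `ℓ` jumbles. -/
def JScatFactLe [DecidableEq α] (k : ℕ) (w : List α) (ℓ : ℕ) : Set (List α) :=
  {u | u.length ≤ k ∧ JSF w ℓ u}

/-- Universality index `ι(w)`: largest `k` with `Σ^k ⊆ ScatFact(w)`. -/
noncomputable def univIndex (α : Type*) [Fintype α] (w : List α) : ℕ :=
  sSup {k : ℕ | ∀ u : List α, u.length = k → u.Sublist w}

/-- Minimal number of occurrences of a letter in `w`. -/
noncomputable def minCount (α : Type*) [Fintype α] [DecidableEq α] [Nonempty α]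
    (w : List α) : ℕ :=
  Finset.univ.inf' Finset.univ_nonempty (fun a : α => w.count a)

-- The rest `r(w)` of the arch factorisation of `w`: repeatedly remove the
-- shortest prefix containing all letters of the alphabet; what remains is the rest.
open scoped Classical in
noncomputable def archRest [Fintype α] [DecidableEq α] [Nonempty α] (w : List α) :
    List α :=
  if h : ∃ i, 0 < i ∧ ∀ a : α, a ∈ w.take i then
    have hpos : 0 < Nat.find h := (Nat.find_spec h).1
    have hw : 0 < w.length := by
      obtain ⟨a⟩ := ‹Nonempty α›
      exact List.length_pos_iff.mpr
        (List.ne_nil_of_mem (List.mem_of_mem_take ((Nat.find_spec h).2 a)))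
    archRest (w.drop (Nat.find h))
  else w
termination_by w.length
decreasing_by simp only [List.length_drop]; omega


section AuxLemmas

lemma sub_aux' {c : α} : ∀ (t : List α) {v d : List α}, c ∉ t →
    (c :: v).Sublist (t ++ c :: d) → v.Sublist d := by
  intro t
  induction t with
  | nil =>
    intro v d _ h
    simpa using List.cons_sublist_cons.mp h
  | cons b t ih =>
    intro v d hc h
    cases h with
    | cons _ h' => exact ih (fun hm => hc (List.mem_cons_of_mem _ hm)) h'
    | cons_cons _ h' => exact absurd List.mem_cons_self hc

lemma cons_sublist_append' {a : α} {s d t : List α} (ha : a ∈ s) (ht : t.Sublist d) :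
    (a :: t).Sublist (s ++ d) := by
  obtain ⟨s₁, s₂, rfl⟩ := List.append_of_mem ha
  rw [List.append_assoc, List.cons_append]
  exact ((List.cons_sublist_cons.mpr (ht.trans (List.sublist_append_right s₂ d))).trans
    (List.sublist_append_right s₁ _))

lemma archRest_sublist' [Fintype α] [DecidableEq α] [Nonempty α] (w : List α) :
    (archRest w).Sublist w := by
  classical
  have H : ∀ n (w : List α), w.length ≤ n → (archRest w).Sublist w := by
    intro n
    induction n with
    | zero =>
      intro w hw
      rw [archRest]
      split
      · next h =>
        obtain ⟨a⟩ := ‹Nonempty α›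
        have := List.mem_of_mem_take ((Nat.find_spec h).2 a)
        have : 0 < w.length := List.length_pos_iff.mpr (List.ne_nil_of_mem this)
        omega
      · exact Sublist.refl w
    | succ n ih =>
      intro w hw
      rw [archRest]
      split
      · next h =>
        have hpos := (Nat.find_spec h).1
        exact (ih _ (by simp only [List.length_drop]; omega)).trans (List.drop_sublist _ _)
      · exact Sublist.refl w
  exact H w.length w le_rfl

lemma archRest_key' [Fintype α] [DecidableEq α] [Nonempty α] :
    ∀ (k : ℕ) (w u : List α) (x : α), u.length = k →
      (∀ v : List α, v.length = k → v.Sublist w) →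
      x ∈ archRest w → (u ++ [x]).Sublist w := by
  classical
  intro k
  induction k with
  | zero =>
    intro w u x hu _ hx
    have hu0 : u = [] := List.length_eq_zero_iff.mp hu
    subst hu0
    simpa using (archRest_sublist' w).subset hx
  | succ k ih =>
    intro w u x hu Hall hx
    cases u with
    | nil => simp at hu
    | cons a u' =>
      have hu' : u'.length = k := by simpa using hu
      have hmem : ∀ b : α, b ∈ w := by
        intro b
        have h1 := Hall (List.replicate (k+1) b) (by simp)
        exact h1.subset (by simp)
      have hwpos : 0 < w.length := by
        obtain ⟨b⟩ := ‹Nonempty α›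
        exact List.length_pos_iff.mpr (List.ne_nil_of_mem (hmem b))
      have h : ∃ i, 0 < i ∧ ∀ a : α, a ∈ w.take i :=
        ⟨w.length, hwpos, by simpa using hmem⟩
      obtain ⟨hnpos, hntake⟩ := Nat.find_spec h
      have hnle : Nat.find h ≤ w.length := Nat.find_min' h ⟨hwpos, by simpa using hmem⟩
      have heq : archRest w = archRest (w.drop (Nat.find h)) := by
        rw [archRest, dif_pos h]
      obtain ⟨m, hm'⟩ : ∃ m, Nat.find h = m + 1 := ⟨Nat.find h - 1, by omega⟩
      rw [hm'] at heq hntake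
      have hm : m < w.length := by omega
      set c := w.get ⟨m, hm⟩ with hc
      have htake : w.take (m+1) = w.take m ++ [c] := by
        rw [List.take_succ]
        simp [List.getElem?_eq_getElem hm, hc, List.get_eq_getElem]
      have hcnot : c ∉ w.take m := by
        rcases Nat.eq_zero_or_pos m with h0 | h0
        · subst h0; simp
        · have hmin := Nat.find_min h (show m < Nat.find h by omega)
          push_neg at hmin
          obtain ⟨b, hb⟩ := hmin h0
          have hbm : b ∈ w.take (m+1) := hntake b
          rw [htake] at hbm
          rcases List.mem_append.mp hbm with h' | h'
          · exact absurd h' hb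
          · have : b = c := by simpa using h'
            subst this; exact hb
      have hsplit : w = w.take m ++ c :: w.drop (m+1) := by
        conv_lhs => rw [← List.take_append_drop (m+1) w]
        rw [htake, List.append_assoc, List.singleton_append]
      have Hrec : ∀ v : List α, v.length = k → v.Sublist (w.drop (m+1)) := by
        intro v hv
        have h1 : (c :: v).Sublist w := Hall _ (by simp [hv])
        rw [hsplit] at h1
        exact sub_aux' _ hcnot h1
      have h2 : (u' ++ [x]).Sublist (w.drop (m+1)) :=
        ih _ u' x hu' Hrec (heq ▸ hx)
      have ha : a ∈ w.take (m+1) := hntake a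
      have : ((a :: u') ++ [x]).Sublist (w.take (m+1) ++ w.drop (m+1)) := by
        rw [List.cons_append]
        exact cons_sublist_append' ha h2
      simpa using this

end AuxLemmas

theorem stmt18 [Fintype α] [DecidableEq α] [Nonempty α] (w : List α) (k : ℕ)
    (hι : univIndex α w = k) (hcount : ∀ a : α, k + 1 ≤ w.count a) :
    {u : List α | u.length = k + 1 ∧ ParikhLE u w ∧ jumbleIndex w u = 1} =
      {u : List α | ∃ (v : List α) (x : α),
          u = v ++ [x] ∧ v.length = k ∧ v.Sublist w ∧ x ∉ archRest w} \
        {u : List α | u.length = k + 1 ∧ u.Sublist w} := by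
  classical
  have hkS : ∀ v : List α, v.length = k → v.Sublist w := by
    have h0 : (0 : ℕ) ∈ {m : ℕ | ∀ u : List α, u.length = m → u.Sublist w} := by
      intro u hu
      rw [List.length_eq_zero_iff.mp hu]
      exact List.nil_sublist w
    have hbdd : BddAbove {m : ℕ | ∀ u : List α, u.length = m → u.Sublist w} := by
      refine ⟨w.length, fun m hm => ?_⟩
      obtain ⟨b⟩ := ‹Nonempty α›
      have := (hm (List.replicate m b) (by simp)).length_le
      simpa using this
    have := Nat.sSup_mem ⟨0, h0⟩ hbdd
    rw [show sSup {m : ℕ | ∀ u : List α, u.length = m → u.Sublist w} = univIndex α w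
      from rfl, hι] at this
    exact this
  ext u
  simp only [Set.mem_setOf_eq, Set.mem_diff]
  constructor
  · rintro ⟨hlen, hpar, hj⟩
    have hnsub : ¬ u.Sublist w := by
      intro hs
      have h0 : JSF w 0 u := ⟨hpar, u, Sublist.refl u, hs, by simp⟩
      have : jumbleIndex w u = 0 := by
        unfold jumbleIndex
        rw [Nat.sInf_eq_zero]
        exact Or.inl h0
      omega
    have hne : u ≠ [] := by
      intro h0; rw [h0] at hlen; simp at hlen
    have hdec : u = u.dropLast ++ [u.getLast hne] := (List.dropLast_append_getLast hne).symm
    have hvlen : u.dropLast.length = k := by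
      rw [List.length_dropLast, hlen]
      omega
    refine ⟨⟨u.dropLast, u.getLast hne, hdec, hvlen, hkS _ hvlen, ?_⟩, ?_⟩
    · intro hx
      apply hnsub
      rw [hdec]
      exact archRest_key' k w u.dropLast _ hvlen hkS hx
    · rintro ⟨_, hs⟩
      exact hnsub hs
  · rintro ⟨⟨v, x, rfl, hvlen, hvsub, -⟩, hnot⟩
    have hlen : (v ++ [x]).length = k + 1 := by simp [hvlen]
    have hnsub : ¬ (v ++ [x]).Sublist w := fun hs => hnot ⟨hlen, hs⟩
    have hpar : ParikhLE (v ++ [x]) w := by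
      intro a
      calc (v ++ [x]).count a ≤ (v ++ [x]).length := List.count_le_length
        _ = k + 1 := hlen
        _ ≤ w.count a := hcount a
    refine ⟨hlen, hpar, ?_⟩
    have h1 : JSF w 1 (v ++ [x]) :=
      ⟨hpar, v, List.sublist_append_left v [x], hvsub, by simp [hvlen]⟩
    have h0 : ¬ JSF w 0 (v ++ [x]) := by
      rintro ⟨-, v', hv'u, hv'w, hlen0⟩
      have : v' = v ++ [x] := hv'u.eq_of_length (by omega)
      exact hnsub (this ▸ hv'w)
    unfold jumbleIndex
    refine le_antisymm (Nat.sInf_le h1) ?_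
    rcases Nat.eq_zero_or_pos (sInf {ℓ : ℕ | JSF w ℓ (v ++ [x])}) with h | h
    · rcases Nat.sInf_eq_zero.mp h with h' | h'
      · exact absurd h' h0
      · have hmem : (1 : ℕ) ∈ {ℓ : ℕ | JSF w ℓ (v ++ [x])} := h1
        rw [h'] at hmem
        exact absurd hmem (Set.notMem_empty 1)
    · exact h
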